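/- Let D be a minimal counterexample and C its Hamilton cycle with the stated domination property. Then for every two vertices x and y of D with y ≠ x and y ≠ x^-, the vertex x monochromatically dominates y within the subtournament of D induced on the vertex set of the directed subpath xCy of C from x to y. -/

import Mathlib

/-- A 3-coloured tournament on vertex type `V`: between any two distinct
vertices there is exactly one directed edge (`beats`), and `colour x y` gives
the colour (one of three: red, blue, green) of the edge from `x` to `y`
(meaningful when `beats x y` holds). -/
structure CTournament (V : Type*) where
  beats : V → V → Prop
  irrefl : ∀ v, ¬ beats v v
  asymm : ∀ v w, beats v w → ¬ beats w v
  total : ∀ v w, v ≠ w → beats v w ∨ beats w v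
  colour : V → V → Fin 3

namespace CTournament

/-- The colour red. -/
def red : Fin 3 := 0
/-- The colour blue. -/
def blue : Fin 3 := 1
/-- The colour green. -/
def green : Fin 3 := 2

variable {V : Type*} (T : CTournament V)

/-- `x` monochromatically dominates `y` in colour `c`: there is a directed
path (with at least one edge) from `x` to `y` all of whose edges have
colour `c`. -/
def Dom (c : Fin 3) (x y : V) : Prop :=
  Relation.TransGen (fun a b => T.beats a b ∧ T.colour a b = c) x y

/-- `x` monochromatically dominates `y` (in some colour). -/
def MDom (x y : V) : Prop := ∃ c, T.Dom c x y

/-- `x` monochromatically dominates `y` in colour `c` within the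
subtournament induced on the vertex set `S`. -/
def DomIn (S : Set V) (c : Fin 3) (x y : V) : Prop :=
  Relation.TransGen (fun a b => a ∈ S ∧ b ∈ S ∧ T.beats a b ∧ T.colour a b = c) x y

/-- `x` monochromatically dominates `y` within the subtournament induced on `S`. -/
def MDomIn (S : Set V) (x y : V) : Prop := ∃ c, T.DomIn S c x y

/-- `T` contains a `T_3`: three vertices spanning a cyclic triangle whose
three edges have three pairwise distinct colours. -/
def HasT3 : Prop :=
  ∃ a b c : V, T.beats a b ∧ T.beats b c ∧ T.beats c a ∧
    T.colour a b ≠ T.colour b c ∧ T.colour b c ≠ T.colour c a ∧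
    T.colour a b ≠ T.colour c a

/-- Vertex `v` is incident with an edge of colour `c`. -/
def IncidentColour (v : V) (c : Fin 3) : Prop :=
  ∃ w, (T.beats v w ∧ T.colour v w = c) ∨ (T.beats w v ∧ T.colour w v = c)

/-- `T` is a minimal counterexample: it contains no `T_3`, no vertex
monochromatically dominates every other vertex, and every proper nonempty
subset of the vertices spans a subtournament containing a vertex that
monochromatically dominates (within that subtournament) every other vertex
of the subset. -/
def MinimalCex : Prop :=
  ¬ T.HasT3 ∧
  (¬ ∃ x : V, ∀ y, y ≠ x → T.MDom x y) ∧
  ∀ S : Set V, S.Nonempty → S ≠ Set.univ →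
    ∃ x ∈ S, ∀ y ∈ S, y ≠ x → T.MDomIn S x y

/-- The permutation `σ` (sending every vertex to its successor) is a directed
Hamilton cycle of `T`: every vertex beats its successor, and all vertices lie
on a single cycle of `σ`. -/
def IsHamCycle (σ : Equiv.Perm V) : Prop :=
  (∀ v, T.beats v (σ v)) ∧ ∀ v w : V, ∃ n : ℕ, (⇑σ)^[n] v = w

/-- The domination property of the Hamilton cycle `σ`: every vertex
monochromatically dominates every vertex other than itself and its
predecessor on the cycle, and no vertex monochromatically dominates its
predecessor. -/
def HamDomProp (σ : Equiv.Perm V) : Prop :=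
  (∀ x y : V, y ≠ x → y ≠ σ.symm x → T.MDom x y) ∧
  ∀ x : V, ¬ T.MDom x (σ.symm x)

/-- The vertex set of the directed subpath `xCy` of the Hamilton cycle whose
successor permutation is `σ`: all vertices reachable from `x` along the cycle
no later than the first visit of `y`. -/
def PathSet (σ : Equiv.Perm V) (x y : V) : Set V :=
  {z | ∃ k : ℕ, (⇑σ)^[k] x = z ∧ ∀ j < k, (⇑σ)^[j] x ≠ y}

/-- `R^+(x)`: the vertices to which `x` sends a red edge. -/
def Rplus (x : V) : Set V := {v | T.beats x v ∧ T.colour x v = red}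
/-- `R^-(x)`: the vertices from which `x` receives a red edge. -/
def Rminus (x : V) : Set V := {v | T.beats v x ∧ T.colour v x = red}
/-- `B^+(x)`: the vertices to which `x` sends a blue edge. -/
def Bplus (x : V) : Set V := {v | T.beats x v ∧ T.colour x v = blue}
/-- `B^-(x)`: the vertices from which `x` receives a blue edge. -/
def Bminus (x : V) : Set V := {v | T.beats v x ∧ T.colour v x = blue}
/-- `R_r^+(x) = {v ∈ R^+(x) : v monochromatically dominates x in red}`. -/
def Rrplus (x : V) : Set V := {v ∈ T.Rplus x | T.Dom red v x}
/-- `R_r^-(x) = {v ∈ R^-(x) : x monochromatically dominates v in red}`. -/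
def Rrminus (x : V) : Set V := {v ∈ T.Rminus x | T.Dom red x v}
/-- `B_b^+(x) = {v ∈ B^+(x) : v monochromatically dominates x in blue}`. -/
def Bbplus (x : V) : Set V := {v ∈ T.Bplus x | T.Dom blue v x}
/-- `B_b^-(x) = {v ∈ B^-(x) : x monochromatically dominates v in blue}`. -/
def Bbminus (x : V) : Set V := {v ∈ T.Bminus x | T.Dom blue x v}

end CTournament
/-- In a minimal counterexample with Hamilton cycle `σ`, every
vertex `x` monochromatically dominates every vertex `y ≠ x, x⁻` within the
subtournament induced on the vertex set of the subpath `xCy`. -/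
theorem dominates_within_subpath {V : Type*} [Fintype V] (T : CTournament V)
    (h : T.MinimalCex) (σ : Equiv.Perm V)
    (hσ : T.IsHamCycle σ) (hprop : T.HamDomProp σ) :
    ∀ x y : V, y ≠ x → y ≠ σ.symm x →
      T.MDomIn (CTournament.PathSet σ x y) x y := by
  classical
  intro x y hyx hyx'
  set f : V → V := ⇑σ with hf
  obtain ⟨hbeats, hreach⟩ := hσ
  set S : Set V := CTournament.PathSet σ x y with hS
  -- x ∈ S
  have hxS : x ∈ S := ⟨0, rfl, fun j hj => absurd hj (Nat.not_lt_zero j)⟩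
  -- the period of x under σ
  have hper_ex : ∃ n, 0 < n ∧ f^[n] x = x := by
    obtain ⟨n, hn⟩ := hreach (σ x) x
    exact ⟨n + 1, Nat.succ_pos n, by
      rw [Function.iterate_succ_apply]; exact hn⟩
  set p : ℕ := Nat.find hper_ex with hp
  obtain ⟨hppos, hpx⟩ : 0 < p ∧ f^[p] x = x := Nat.find_spec hper_ex
  have hperiod : ∀ q r : ℕ, f^[p * q + r] x = f^[r] x := by
    intro q r
    induction q with
    | zero => simp
    | succ q ih =>
      have : p * (q + 1) + r = (p * q + r) + p := by ring
      rw [this, Function.iterate_add_apply, hpx, ih]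
  -- σ⁻¹ x = f^[p-1] x
  have hpred : f^[p - 1] x = σ.symm x := by
    have h1 : σ (f^[p - 1] x) = x := by
      have h2 : f^[p - 1 + 1] x = f (f^[p - 1] x) :=
        Function.iterate_succ_apply' f (p - 1) x
      rw [Nat.sub_add_cancel hppos, hpx] at h2
      exact h2.symm
    exact (Equiv.eq_symm_apply σ).mpr h1
  -- y ∈ S
  obtain ⟨m0, hm0⟩ := hreach x y
  have hyS : y ∈ S := by
    have hex : ∃ n, f^[n] x = y := ⟨m0, hm0⟩
    exact ⟨Nat.find hex, Nat.find_spec hex, fun j hj => Nat.find_min hex hj⟩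
  -- σ⁻¹ x ∉ S
  have hpredx : σ.symm x ∉ S := by
    rintro ⟨k, hk, hmiss⟩
    have hk1 : f^[k + 1] x = x := by
      rw [Function.iterate_succ_apply', hk]
      exact σ.apply_symm_apply x
    have hple : p ≤ k + 1 := Nat.find_min' hper_ex ⟨Nat.succ_pos k, hk1⟩
    have hmlt : m0 % p < p := Nat.mod_lt _ hppos
    have hmy : f^[m0 % p] x = y := by
      have h2 := hperiod (m0 / p) (m0 % p)
      rw [Nat.div_add_mod] at h2
      rw [← h2]
      exact hm0
    have hne : m0 % p ≠ p - 1 := by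
      intro heq
      apply hyx'
      rw [← hmy, heq, hpred]
    have : m0 % p < k := by omega
    exact hmiss _ this hmy
  have hSproper : S ≠ Set.univ := by
    intro heq
    exact hpredx (heq ▸ Set.mem_univ _)
  obtain ⟨z, hzS, hzdom⟩ := h.2.2 S ⟨x, hxS⟩ hSproper
  by_cases hzx : z = x
  · subst hzx
    exact hzdom y hyS hyx
  · -- z ≠ x: derive contradiction via z dominating its predecessor
    exfalso
    obtain ⟨k, hk, hmiss⟩ := hzS
    have hk0 : k ≠ 0 := by
      intro h0; apply hzx; rw [← hk, h0]; rfl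
    obtain ⟨k', rfl⟩ := Nat.exists_eq_succ_of_ne_zero hk0
    have hpredz : f^[k'] x = σ.symm z := by
      have h1 : σ (f^[k'] x) = z := by
        show f (f^[k'] x) = z
        rw [← Function.iterate_succ_apply' f k' x]
        exact hk
      exact (Equiv.eq_symm_apply σ).mpr h1
    have hpz_mem : σ.symm z ∈ S :=
      ⟨k', hpredz, fun j hj => hmiss j (hj.trans (Nat.lt_succ_self k'))⟩
    have hpz_ne : σ.symm z ≠ z := by
      intro heq
      have hfix : σ z = z := by
        have h2 := congrArg σ heq
        simpa using h2.symm
      obtain ⟨n, hn⟩ := hreach z x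
      have : f^[n] z = z := Function.iterate_fixed hfix n
      exact hzx (by rw [← hn, this])
    obtain ⟨c, hc⟩ := hzdom (σ.symm z) hpz_mem hpz_ne
    exact hprop.2 z ⟨c, Relation.TransGen.mono (fun a b hab => ⟨hab.2.2.1, hab.2.2.2⟩) _ _ hc⟩
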